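/- For every integer n ≥ 8, the product of the first n primes satisfies p_1 · p_2 · ⋯ · p_n > p_{n+1}^5. -/
import Mathlib

lemma nth_prime_eq {k v : ℕ} (hv : Nat.Prime v) (hc : Nat.count Nat.Prime v = k) :
    Nat.nth Nat.Prime k = v := by
  rw [← hc]; exact Nat.nth_count hv

lemma np8 : Nat.nth Nat.Prime 8 = 23 := nth_prime_eq (by norm_num) (by decide)
lemma np9 : Nat.nth Nat.Prime 9 = 29 := nth_prime_eq (by norm_num) (by decide)
lemma np10 : Nat.nth Nat.Prime 10 = 31 := nth_prime_eq (by norm_num) (by decide)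
lemma np11 : Nat.nth Nat.Prime 11 = 37 := nth_prime_eq (by norm_num) (by decide)

lemma prod8 : (∏ i ∈ Finset.range 8, Nat.nth Nat.Prime i) = 9699690 := by
  simp [Finset.prod_range_succ,
    nth_prime_eq (k := 0) (v := 2) (by norm_num) (by decide),
    nth_prime_eq (k := 1) (v := 3) (by norm_num) (by decide),
    nth_prime_eq (k := 2) (v := 5) (by norm_num) (by decide),
    nth_prime_eq (k := 3) (v := 7) (by norm_num) (by decide),
    nth_prime_eq (k := 4) (v := 11) (by norm_num) (by decide),
    nth_prime_eq (k := 5) (v := 13) (by norm_num) (by decide),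
    nth_prime_eq (k := 6) (v := 17) (by norm_num) (by decide),
    nth_prime_eq (k := 7) (v := 19) (by norm_num) (by decide)]

lemma bertrand_nth (m : ℕ) :
    Nat.nth Nat.Prime (m + 1) ≤ 2 * Nat.nth Nat.Prime m := by
  have hp := Nat.prime_nth_prime m
  obtain ⟨q, hq, h1, h2⟩ := Nat.exists_prime_lt_and_le_two_mul (Nat.nth Nat.Prime m) hp.pos.ne'
  have : Nat.nth Nat.Prime (m + 1) ≤ q := by
    by_contra h
    exact absurd (Nat.le_nth_of_lt_nth_succ (not_le.1 h) hq) (not_le.2 h1)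
  omega

/-- For every integer n ≥ 8, p_1 ⋯ p_n > p_{n+1}^5. -/
theorem stmt_11 (n : ℕ) (hn : 8 ≤ n) :
    (∏ i ∈ Finset.range n, Nat.nth Nat.Prime i) > (Nat.nth Nat.Prime n) ^ 5 := by
  induction n with
  | zero => omega
  | succ m ih =>
    rcases eq_or_lt_of_le hn with h | h
    · -- m + 1 = 8
      have hm : m = 7 := by omega
      subst hm
      rw [prod8, np8]; norm_num
    · have hm : 8 ≤ m := by omega
      have ihm := ih hm
      rw [Finset.prod_range_succ]
      have hpm := (Nat.prime_nth_prime m).two_le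
      have hb := bertrand_nth m
      -- p_{m+1}^5 ≤ 32 * p_m^5
      have h5 : (Nat.nth Nat.Prime (m + 1)) ^ 5 ≤ 32 * (Nat.nth Nat.Prime m) ^ 5 := by
        calc (Nat.nth Nat.Prime (m + 1)) ^ 5 ≤ (2 * Nat.nth Nat.Prime m) ^ 5 :=
              Nat.pow_le_pow_left hb 5
          _ = 32 * (Nat.nth Nat.Prime m) ^ 5 := by ring
      rcases Nat.lt_or_ge m 11 with hc | hc
      · -- m ∈ {8, 9, 10}: check p_m^5 * p_m > p_{m+1}^5 combined with product bound
        interval_cases m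
        · norm_num [np8, np9] at ihm ⊢
          calc (29:ℕ)^5 < 23^5 * 23 := by norm_num
            _ ≤ _ := Nat.mul_le_mul_right _ (by omega)
        · norm_num [np9, np10] at ihm ⊢
          calc (31:ℕ)^5 < 29^5 * 29 := by norm_num
            _ ≤ _ := Nat.mul_le_mul_right _ (by omega)
        · norm_num [np10, np11] at ihm ⊢
          calc (37:ℕ)^5 < 31^5 * 31 := by norm_num
            _ ≤ _ := Nat.mul_le_mul_right _ (by omega)
      · -- m ≥ 11 so p_m ≥ 37 > 32
        have h37 : 37 ≤ Nat.nth Nat.Prime m := by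
          calc 37 = Nat.nth Nat.Prime 11 := np11.symm
            _ ≤ Nat.nth Nat.Prime m :=
              (Nat.nth_le_nth (Nat.infinite_setOf_prime)).2 hc
        calc (Nat.nth Nat.Prime (m + 1)) ^ 5 ≤ 32 * (Nat.nth Nat.Prime m) ^ 5 := h5
          _ < (Nat.nth Nat.Prime m) ^ 5 * Nat.nth Nat.Prime m := by
              nlinarith [pow_pos (show 0 < Nat.nth Nat.Prime m by omega) 5]
          _ ≤ _ := Nat.mul_le_mul_right _ (le_of_lt ihm)
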